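/- arXiv:1306.3815 — 3 statements merged into one kernel-verified Lean document; each statement's English description precedes it below -/
import Mathlib

section
/- Let ρ be a product density on ℝ^d and f ∈ L²_ρ(ℝ^d). The ANOVA terms {f_u}_{u ⊆ D}, defined recursively by f_∅ = ∫_{ℝ^d} f ρ dξ and f_u = P_{-u}(f) − ∑_{v ⊊ u} f_v (where P_{-u} integrates out all variables with indices outside u), are pairwise orthogonal in L²_ρ(ℝ^d): for u ≠ w, ∫_{ℝ^d} f_u f_w ρ dξ = 0. -/
open MeasureTheory

noncomputable def margMeas {d : ℕ} (ρ : Fin d → ℝ → ℝ) (i : Fin d) : Measure ℝ :=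
  MeasureTheory.volume.withDensity fun s => ENNReal.ofReal (ρ i s)

noncomputable def piMeas {d : ℕ} (ρ : Fin d → ℝ → ℝ) : Measure (Fin d → ℝ) :=
  Measure.pi fun i => margMeas ρ i

/-- `P_{-u} f`: integrate out all coordinates with indices outside `u`
(against the corresponding marginal densities), keeping the coordinates in `u`. -/
noncomputable def proj {d : ℕ} (ρ : Fin d → ℝ → ℝ) (u : Finset (Fin d))
    (f : (Fin d → ℝ) → ℝ) : (Fin d → ℝ) → ℝ :=
  fun ξ => ∫ η, f (fun i => if i ∈ u then ξ i else η i) ∂(piMeas ρ)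

/-- The ANOVA term `f_u` (given by the inclusion–exclusion formula, which is
equivalent to the recursion `f_∅ = I_{d,ρ}(f)`, `f_u = P_{-u} f − ∑_{v ⊊ u} f_v`). -/
noncomputable def anova {d : ℕ} (ρ : Fin d → ℝ → ℝ) (u : Finset (Fin d))
    (f : (Fin d → ℝ) → ℝ) : (Fin d → ℝ) → ℝ :=
  fun ξ => ∑ v ∈ u.powerset, (-1 : ℝ) ^ (u.card - v.card) * proj ρ v f ξ

/-! ### Auxiliary definitions and lemmas -/

/-- Combine two vectors: coordinates in `v` from `ξ`, the rest from `η`. -/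
def sel {d : ℕ} (v : Finset (Fin d)) (ξ η : Fin d → ℝ) : Fin d → ℝ :=
  fun i => if i ∈ v then ξ i else η i

lemma proj_eq_sel {d : ℕ} (ρ : Fin d → ℝ → ℝ) (v : Finset (Fin d))
    (f : (Fin d → ℝ) → ℝ) (ξ : Fin d → ℝ) :
    proj ρ v f ξ = ∫ η, f (sel v ξ η) ∂(piMeas ρ) := rfl

lemma measurable_sel {d : ℕ} (v : Finset (Fin d)) :
    Measurable fun p : (Fin d → ℝ) × (Fin d → ℝ) => sel v p.1 p.2 := by
  apply measurable_pi_lambda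
  intro i
  by_cases hi : i ∈ v <;> simp only [sel, hi, if_true, if_false]
  · exact (measurable_pi_apply i).comp measurable_fst
  · exact (measurable_pi_apply i).comp measurable_snd

lemma margProb {d : ℕ} (ρ : Fin d → ℝ → ℝ) (hρ0 : ∀ i s, 0 ≤ ρ i s)
    (hρ1 : ∀ i, ∫ s, ρ i s = 1) (i : Fin d) :
    IsProbabilityMeasure (margMeas ρ i) := by
  constructor
  have hint : Integrable (ρ i) := by
    by_contra h
    have h1 := hρ1 i
    rw [integral_undef h] at h1
    exact one_ne_zero h1.symm
  have : (margMeas ρ i) Set.univ = ∫⁻ s, ENNReal.ofReal (ρ i s) := by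
    rw [margMeas, withDensity_apply _ MeasurableSet.univ, setLIntegral_univ]
  rw [this, ← ofReal_integral_eq_lintegral_ofReal hint
    (Filter.Eventually.of_forall (hρ0 i)), hρ1 i, ENNReal.ofReal_one]

/-- Resampling the coordinates outside `v` leaves the product measure invariant. -/
lemma mapSel {d : ℕ} (ρ : Fin d → ℝ → ℝ)
    (hprob : ∀ i, IsProbabilityMeasure (margMeas ρ i)) (v : Finset (Fin d)) :
    Measure.map (fun p : (Fin d → ℝ) × (Fin d → ℝ) => sel v p.1 p.2)
      ((piMeas ρ).prod (piMeas ρ)) = piMeas ρ := by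
  haveI := hprob
  haveI : IsProbabilityMeasure (piMeas ρ) := by
    simp only [piMeas]; infer_instance
  symm
  show Measure.pi (fun i => margMeas ρ i) = _
  refine Measure.pi_eq fun s hs => ?_
  rw [Measure.map_apply (measurable_sel v) (MeasurableSet.univ_pi hs)]
  have hpre : (fun p : (Fin d → ℝ) × (Fin d → ℝ) => sel v p.1 p.2) ⁻¹' (Set.pi Set.univ s)
      = (Set.pi Set.univ fun i => if i ∈ v then s i else Set.univ) ×ˢ
        (Set.pi Set.univ fun i => if i ∈ v then Set.univ else s i) := by
    ext p
    simp only [Set.mem_preimage, Set.mem_pi, Set.mem_univ, true_implies, Set.mem_prod, sel]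
    constructor
    · intro h
      constructor <;> intro i <;> have := h i <;> by_cases hi : i ∈ v <;>
        simp only [hi, if_true, if_false] at this ⊢ <;>
        first | exact this | exact Set.mem_univ _
    · rintro ⟨h1, h2⟩ i
      by_cases hi : i ∈ v
      · have := h1 i; simpa only [hi, if_true] using this
      · have := h2 i; simpa only [hi, if_false] using this
  rw [hpre, Measure.prod_prod]
  simp only [piMeas]
  rw [Measure.pi_pi, Measure.pi_pi, ← Finset.prod_mul_distrib]
  refine Finset.prod_congr rfl fun i _ => ?_
  by_cases hi : i ∈ v <;> simp [hi, measure_univ]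

lemma proj_congr {d : ℕ} (ρ : Fin d → ℝ → ℝ) (v : Finset (Fin d))
    (f : (Fin d → ℝ) → ℝ) {ξ₁ ξ₂ : Fin d → ℝ} (h : ∀ i ∈ v, ξ₁ i = ξ₂ i) :
    proj ρ v f ξ₁ = proj ρ v f ξ₂ := by
  unfold proj
  congr 1
  funext η
  congr 1
  funext i
  by_cases hi : i ∈ v <;> simp only [hi, if_true, if_false]
  exact h i hi

lemma anova_congr {d : ℕ} (ρ : Fin d → ℝ → ℝ) (w : Finset (Fin d))
    (f : (Fin d → ℝ) → ℝ) {ξ₁ ξ₂ : Fin d → ℝ} (h : ∀ i ∈ w, ξ₁ i = ξ₂ i) :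
    anova ρ w f ξ₁ = anova ρ w f ξ₂ := by
  unfold anova
  refine Finset.sum_congr rfl fun v hv => ?_
  have hvw : v ⊆ w := Finset.mem_powerset.mp hv
  rw [proj_congr ρ v f fun i hi => h i (hvw hi)]

lemma alt_sum {α : Type*} [DecidableEq α] (u : Finset α) (k : α) (hk : k ∈ u)
    (P : Finset α → ℝ) :
    ∑ v ∈ u.powerset, (-1 : ℝ) ^ (u.card - v.card) *
      (if k ∈ v then P (v.erase k) else P v) = 0 := by
  set s := u.erase k with hs
  have hks : k ∉ s := Finset.notMem_erase k u
  have hu : u = insert k s := (Finset.insert_erase hk).symm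
  have hdisj : Disjoint s.powerset (s.powerset.image (insert k)) := by
    rw [Finset.disjoint_left]
    intro v hv hv2
    obtain ⟨v', _, rfl⟩ := Finset.mem_image.mp hv2
    exact hks (Finset.mem_powerset.mp hv (Finset.mem_insert_self k v'))
  rw [hu, Finset.powerset_insert, Finset.sum_union hdisj, Finset.sum_image ?_]
  · have hcard : (insert k s).card = s.card + 1 := Finset.card_insert_of_notMem hks
    rw [← Finset.sum_add_distrib]
    apply Finset.sum_eq_zero
    intro v hv
    have hvs : v ⊆ s := Finset.mem_powerset.mp hv
    have hkv : k ∉ v := fun h => hks (hvs h)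
    have h2 : (insert k v).erase k = v := Finset.erase_insert hkv
    have hc : (insert k v).card = v.card + 1 := Finset.card_insert_of_notMem hkv
    simp only [if_neg hkv, if_pos (Finset.mem_insert_self k v), h2, hc, hcard]
    have hle : v.card ≤ s.card := Finset.card_le_card hvs
    have e1 : s.card + 1 - v.card = (s.card - v.card) + 1 := by omega
    have e2 : s.card + 1 - (v.card + 1) = s.card - v.card := by omega
    rw [e1, e2, pow_succ]
    ring
  · intro a ha b hb hab
    have hka : k ∉ a := fun h => hks (Finset.mem_powerset.mp ha h)
    have hkb : k ∉ b := fun h => hks (Finset.mem_powerset.mp hb h)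
    have := congrArg (fun t => Finset.erase t k) hab
    simpa [Finset.erase_insert hka, Finset.erase_insert hkb] using this

lemma aux_orth {d : ℕ} (ρ : Fin d → ℝ → ℝ)
    (hprob : ∀ i, IsProbabilityMeasure (margMeas ρ i))
    (f : (Fin d → ℝ) → ℝ) (hfi : Integrable f (piMeas ρ))
    (u w : Finset (Fin d)) (k : Fin d) (hku : k ∈ u) (hkw : k ∉ w) :
    ∫ ξ, anova ρ u f ξ * anova ρ w f ξ ∂(piMeas ρ) = 0 := by
  haveI := hprob
  haveI hPP : IsProbabilityMeasure (piMeas ρ) := by simp only [piMeas]; infer_instance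
  by_cases hgint : Integrable (fun ξ => anova ρ u f ξ * anova ρ w f ξ) (piMeas ρ)
  swap
  · exact integral_undef hgint
  set kc : Finset (Fin d) := ({k} : Finset (Fin d))ᶜ with hkc
  have hmem_kc : ∀ i : Fin d, i ≠ k → i ∈ kc := by
    intro i hi; simp [hkc, hi]
  have hk_not_kc : k ∉ kc := by simp [hkc]
  have hmapkc := mapSel ρ hprob kc
  have hφ := measurable_sel (d := d) kc
  have hgsm : AEStronglyMeasurable (fun ξ => anova ρ u f ξ * anova ρ w f ξ)
      (Measure.map (fun p : (Fin d → ℝ) × (Fin d → ℝ) => sel kc p.1 p.2) ((piMeas ρ).prod (piMeas ρ))) := by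
    rw [hmapkc]; exact hgint.1
  have hG : Integrable (fun p : (Fin d → ℝ) × (Fin d → ℝ) =>
      anova ρ u f (sel kc p.1 p.2) * anova ρ w f (sel kc p.1 p.2)) ((piMeas ρ).prod (piMeas ρ)) := by
    have := (integrable_map_measure hgsm hφ.aemeasurable).mp (by rw [hmapkc]; exact hgint)
    exact this
  -- a.e. integrability of slices
  have hslice : ∀ S : Finset (Fin d),
      ∀ᵐ ζ ∂(piMeas ρ), Integrable (fun θ => f (sel S ζ θ)) (piMeas ρ) := by
    intro S
    have hsm : AEStronglyMeasurable f
        (Measure.map (fun p : (Fin d → ℝ) × (Fin d → ℝ) => sel S p.1 p.2) ((piMeas ρ).prod (piMeas ρ))) := by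
      rw [mapSel ρ hprob S]; exact hfi.1
    have hFi : Integrable (fun p : (Fin d → ℝ) × (Fin d → ℝ) => f (sel S p.1 p.2))
        ((piMeas ρ).prod (piMeas ρ)) := by
      have := (integrable_map_measure hsm (measurable_sel S).aemeasurable).mp
        (by rw [mapSel ρ hprob S]; exact hfi)
      exact this
    exact hFi.prod_right_ae
  have hAE : ∀ᵐ ζ ∂(piMeas ρ), ∀ v ∈ u.powerset, Integrable (fun θ => f (sel (v.erase k) ζ θ)) (piMeas ρ) := by
    have h' : ∀ᵐ ζ ∂(piMeas ρ), ∀ v ∈ (↑u.powerset : Set (Finset (Fin d))),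
        Integrable (fun θ => f (sel (v.erase k) ζ θ)) (piMeas ρ) :=
      (ae_ball_iff (u.powerset : Finset (Finset (Fin d))).countable_toSet).mpr
        fun v _ => hslice (v.erase k)
    filter_upwards [h'] with ζ h v hv
    exact h v (by simpa using hv)
  have key : ∫ ξ, anova ρ u f ξ * anova ρ w f ξ ∂(piMeas ρ)
      = ∫ ζ, ∫ η, anova ρ u f (sel kc ζ η) * anova ρ w f (sel kc ζ η) ∂(piMeas ρ) ∂(piMeas ρ) := by
    conv_lhs => rw [← hmapkc]
    rw [integral_map hφ.aemeasurable hgsm, MeasureTheory.integral_prod _ hG]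
  rw [key]
  have hinner : ∀ᵐ ζ ∂(piMeas ρ),
      (∫ η, anova ρ u f (sel kc ζ η) * anova ρ w f (sel kc ζ η) ∂(piMeas ρ)) = 0 := by
    filter_upwards [hAE] with ζ hζ
    -- the w-factor does not depend on η
    have hwconst : ∀ η, anova ρ w f (sel kc ζ η) = anova ρ w f ζ := by
      intro η
      refine anova_congr ρ w f fun i hi => ?_
      have : i ≠ k := fun h => hkw (h ▸ hi)
      simp [sel, hmem_kc i this]
    simp_rw [hwconst]
    rw [integral_mul_const]
    -- it remains to show the u-factor integrates to zero
    have hu0 : ∫ η, anova ρ u f (sel kc ζ η) ∂(piMeas ρ) = 0 := by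
      have keyv : ∀ v ∈ u.powerset,
          Integrable (fun η => proj ρ v f (sel kc ζ η)) (piMeas ρ) ∧
          ∫ η, proj ρ v f (sel kc ζ η) ∂(piMeas ρ)
            = (if k ∈ v then proj ρ (v.erase k) f ζ else proj ρ v f ζ) := by
        intro v hv
        by_cases hkv : k ∈ v
        · have hident : ∀ η, proj ρ v f (sel kc ζ η)
              = ∫ θ, f (sel (v.erase k) ζ (sel ({k} : Finset (Fin d)) η θ)) ∂(piMeas ρ) := by
            intro η
            rw [proj_eq_sel]
            congr 1
            funext θ
            congr 1
            funext i
            by_cases hiv : i ∈ v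
            · by_cases hik : i = k
              · subst hik
                simp [sel, hiv, hk_not_kc, Finset.notMem_erase]
              · simp [sel, hiv, hmem_kc i hik, Finset.mem_erase, hik]
            · have hik : i ≠ k := fun h => hiv (h ▸ hkv)
              simp [sel, hiv, Finset.mem_erase, hik, fun h : i ∈ v.erase k =>
                hiv (Finset.mem_of_mem_erase h)]
          have hv1 : Integrable (fun θ => f (sel (v.erase k) ζ θ)) (piMeas ρ) := hζ v hv
          have hsm1 : AEStronglyMeasurable (fun θ => f (sel (v.erase k) ζ θ))
              (Measure.map (fun p : (Fin d → ℝ) × (Fin d → ℝ) =>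
                sel ({k} : Finset (Fin d)) p.1 p.2) ((piMeas ρ).prod (piMeas ρ))) := by
            rw [mapSel ρ hprob]; exact hv1.1
          have hF : Integrable (fun p : (Fin d → ℝ) × (Fin d → ℝ) =>
              f (sel (v.erase k) ζ (sel ({k} : Finset (Fin d)) p.1 p.2))) ((piMeas ρ).prod (piMeas ρ)) := by
            have := (integrable_map_measure hsm1
              (measurable_sel ({k} : Finset (Fin d))).aemeasurable).mp
              (by rw [mapSel ρ hprob]; exact hv1)
            exact this
          constructor
          · simp_rw [hident]
            exact hF.integral_prod_left
          · simp_rw [hident, if_pos hkv]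
            have h1 : ∫ η, ∫ θ, f (sel (v.erase k) ζ
                (sel ({k} : Finset (Fin d)) η θ)) ∂(piMeas ρ) ∂(piMeas ρ)
                = ∫ p : (Fin d → ℝ) × (Fin d → ℝ), f (sel (v.erase k) ζ
                  (sel ({k} : Finset (Fin d)) p.1 p.2)) ∂((piMeas ρ).prod (piMeas ρ)) :=
              (MeasureTheory.integral_prod _ hF).symm
            rw [h1, ← integral_map (measurable_sel ({k} : Finset (Fin d))).aemeasurable hsm1,
              mapSel ρ hprob, proj_eq_sel]
        · have hident : ∀ η, proj ρ v f (sel kc ζ η) = proj ρ v f ζ := by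
            intro η
            refine proj_congr ρ v f fun i hi => ?_
            have : i ≠ k := fun h => hkv (h ▸ hi)
            simp [sel, hmem_kc i this]
          constructor
          · simp_rw [hident]; exact integrable_const _
          · simp_rw [hident, if_neg hkv]
            simp [measure_univ]
      show ∫ η, ∑ v ∈ u.powerset, (-1 : ℝ) ^ (u.card - v.card)
          * proj ρ v f (sel kc ζ η) ∂(piMeas ρ) = 0
      rw [integral_finset_sum _ fun v hv => ((keyv v hv).1.const_mul _)]
      have : ∀ v ∈ u.powerset,
          (∫ η, (-1 : ℝ) ^ (u.card - v.card) * proj ρ v f (sel kc ζ η) ∂(piMeas ρ))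
            = (-1 : ℝ) ^ (u.card - v.card) *
              (if k ∈ v then proj ρ (v.erase k) f ζ else proj ρ v f ζ) := by
        intro v hv
        rw [MeasureTheory.integral_const_mul, (keyv v hv).2]
      rw [Finset.sum_congr rfl this]
      exact alt_sum u k hku fun S => proj ρ S f ζ
    rw [hu0, zero_mul]
  rw [integral_congr_ae hinner, integral_zero]

/-- The ANOVA terms of `f ∈ L²_ρ(ℝ^d)` are pairwise orthogonal in `L²_ρ(ℝ^d)`. -/
theorem anova_orthogonal {d : ℕ} (ρ : Fin d → ℝ → ℝ)
    (hρm : ∀ i, Measurable (ρ i)) (hρ0 : ∀ i s, 0 ≤ ρ i s)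
    (hρ1 : ∀ i, ∫ s, ρ i s = 1)
    (f : (Fin d → ℝ) → ℝ) (hf : MemLp f 2 (piMeas ρ))
    (u w : Finset (Fin d)) (huw : u ≠ w) :
    ∫ ξ, anova ρ u f ξ * anova ρ w f ξ ∂(piMeas ρ) = 0 := by
  have hprob : ∀ i, IsProbabilityMeasure (margMeas ρ i) := margProb ρ hρ0 hρ1
  haveI := hprob
  haveI : IsProbabilityMeasure (piMeas ρ) := by simp only [piMeas]; infer_instance
  have hfi : Integrable f (piMeas ρ) := hf.integrable (by norm_num)
  by_cases hsub : u ⊆ w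
  · have hns : ¬ w ⊆ u := fun h => huw (Finset.Subset.antisymm hsub h)
    obtain ⟨k, hkw, hku⟩ := Finset.not_subset.mp hns
    calc ∫ ξ, anova ρ u f ξ * anova ρ w f ξ ∂(piMeas ρ)
        = ∫ ξ, anova ρ w f ξ * anova ρ u f ξ ∂(piMeas ρ) := by
          congr 1; funext ξ; ring
      _ = 0 := aux_orth ρ hprob f hfi w u k hkw hku
  · obtain ⟨k, hku, hkw⟩ := Finset.not_subset.mp hsub
    exact aux_orth ρ hprob f hfi u w k hku hkw
end

section
/- Consider f(ξ₁,ξ₂) = max{|ξ₁|, ξ₂} and a continuous probability density ρ₂ on ℝ with finite first moment. The projection (P₂f)(ξ₁) = |ξ₁| ∫_{−∞}^{|ξ₁|} ρ₂(s)ds + ∫_{|ξ₁|}^{∞} s ρ₂(s)ds is not continuously differentiable at ξ₁ = 0 whenever ∫_{−∞}^{0} ρ₂(s)ds > 0; specifically its one-sided derivatives at 0 are ±φ₂(0), where φ₂ is the distribution function of ρ₂. -/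
open MeasureTheory

/-- For `f(ξ₁,ξ₂) = max{|ξ₁|, ξ₂}`, the projection
`(P₂f)(ξ₁) = |ξ₁| φ₂(|ξ₁|) + ∫_{|ξ₁|}^∞ s ρ₂(s) ds` has one-sided derivatives
`±φ₂(0)` at `0` and is not differentiable there whenever `φ₂(0) > 0`. -/
theorem projection_not_C1_example (ρ₂ : ℝ → ℝ)
    (hρc : Continuous ρ₂) (hρ0 : ∀ s, 0 ≤ ρ₂ s) (hρ1 : ∫ s, ρ₂ s = 1)
    (hmom : Integrable (fun s => |s| * ρ₂ s))
    (φ₂ : ℝ → ℝ) (hφ : φ₂ = fun t => ∫ s in Set.Iic t, ρ₂ s)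
    (g : ℝ → ℝ)
    (hg : g = fun ξ₁ => |ξ₁| * φ₂ |ξ₁| + ∫ s in Set.Ioi |ξ₁|, s * ρ₂ s) :
    HasDerivWithinAt g (φ₂ 0) (Set.Ici 0) 0 ∧
    HasDerivWithinAt g (-φ₂ 0) (Set.Iic 0) 0 ∧
    (0 < φ₂ 0 → ¬ DifferentiableAt ℝ g 0) := by
  have hρint : Integrable ρ₂ := by
    by_contra h
    rw [integral_undef h] at hρ1; norm_num at hρ1
  have hint : Integrable (fun s => s * ρ₂ s) := by
    refine hmom.mono ((continuous_id.mul hρc).aestronglyMeasurable) (ae_of_all _ fun s => ?_)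
    simp [Real.norm_eq_abs, abs_mul, abs_abs]
  set h : ℝ → ℝ := fun ξ =>
      ξ * (∫ s in Set.Iic ξ, ρ₂ s) +
        ((∫ s in Set.Ioi (0:ℝ), s * ρ₂ s) - ∫ x in (0:ℝ)..ξ, x * ρ₂ x) with hdef
  -- g agrees with h ∘ |·|
  have heq : ∀ ξ : ℝ, 0 ≤ ξ → g ξ = h ξ := by
    intro ξ hξ
    have habs : |ξ| = ξ := abs_of_nonneg hξ
    have hsplit : (∫ s in Set.Ioi (0:ℝ), s * ρ₂ s)
        = (∫ s in Set.Ioc (0:ℝ) ξ, s * ρ₂ s) + ∫ s in Set.Ioi ξ, s * ρ₂ s := by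
      rw [← setIntegral_union (Set.Ioc_disjoint_Ioi le_rfl) measurableSet_Ioi
        (hint.integrableOn) (hint.integrableOn), Set.Ioc_union_Ioi_eq_Ioi hξ]
    have hIoc : (∫ x in (0:ℝ)..ξ, x * ρ₂ x) = ∫ s in Set.Ioc (0:ℝ) ξ, s * ρ₂ s :=
      intervalIntegral.integral_of_le hξ
    simp only [hg, hφ, hdef, habs, hIoc, hsplit]
    ring
  have hneg : ∀ ξ : ℝ, ξ ≤ 0 → g ξ = h (-ξ) := by
    intro ξ hξ
    have habs : |ξ| = -ξ := abs_of_nonpos hξ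
    have := heq (-ξ) (by linarith)
    rw [hg, hφ] at this ⊢
    simp only [habs]
    simpa [abs_of_nonneg (show (0:ℝ) ≤ -ξ by linarith)] using this
  -- derivative of h at 0
  have dφ : HasDerivAt (fun ξ => ∫ s in Set.Iic ξ, ρ₂ s) (ρ₂ 0) 0 := by
    have ftc := intervalIntegral.integral_hasDerivAt_right (f := ρ₂) (a := 0) (b := 0)
      (hρint.intervalIntegrable) (hρc.stronglyMeasurableAtFilter _ _) hρc.continuousAt
    have : HasDerivAt (fun ξ => (∫ s in Set.Iic (0:ℝ), ρ₂ s) + ∫ x in (0:ℝ)..ξ, ρ₂ x)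
        (ρ₂ 0) 0 := ftc.const_add _
    refine this.congr_of_eventuallyEq (Filter.Eventually.of_forall fun ξ => ?_)
    have := intervalIntegral.integral_Iic_sub_Iic (hρint.integrableOn (s := Set.Iic 0))
      (hρint.integrableOn (s := Set.Iic ξ))
    dsimp only
    linarith
  have dI : HasDerivAt (fun ξ => ∫ x in (0:ℝ)..ξ, x * ρ₂ x) (0 * ρ₂ 0) 0 := by
    simpa using intervalIntegral.integral_hasDerivAt_right (f := fun x => x * ρ₂ x)
      (a := 0) (b := 0) (hint.intervalIntegrable)
      ((continuous_id.mul hρc).stronglyMeasurableAtFilter _ _)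
      ((continuous_id.mul hρc).continuousAt)
  have dh : HasDerivAt h (φ₂ 0) 0 := by
    have := ((hasDerivAt_id (0:ℝ)).mul dφ).add (dI.const_sub (∫ s in Set.Ioi (0:ℝ), s * ρ₂ s))
    rw [hdef, hφ]
    convert this using 1
    all_goals try rfl
    simp
  have hright : HasDerivWithinAt g (φ₂ 0) (Set.Ici 0) 0 := by
    refine (dh.hasDerivWithinAt).congr (fun ξ hξ => heq ξ hξ) (heq 0 le_rfl)
  have hleft : HasDerivWithinAt g (-φ₂ 0) (Set.Iic 0) 0 := by
    have dcomp : HasDerivAt (fun ξ => h (-ξ)) (φ₂ 0 * (-1)) 0 := by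
      have dh' : HasDerivAt h (φ₂ 0) (-0 : ℝ) := by rw [neg_zero]; exact dh
      exact dh'.comp 0 (hasDerivAt_neg 0)
    have : HasDerivAt (fun ξ => h (-ξ)) (-φ₂ 0) 0 := by simpa using dcomp
    exact (this.hasDerivWithinAt).congr (fun ξ hξ => hneg ξ hξ) (by simpa using hneg 0 le_rfl)
  refine ⟨hright, hleft, fun hpos hdiff => ?_⟩
  have hd := hdiff.hasDerivAt
  have u1 : UniqueDiffWithinAt ℝ (Set.Ici (0:ℝ)) 0 := uniqueDiffOn_Ici 0 0 (by simp)
  have u2 : UniqueDiffWithinAt ℝ (Set.Iic (0:ℝ)) 0 := uniqueDiffOn_Iic 0 0 (by simp)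
  have e1 : φ₂ 0 = deriv g 0 := by
    rw [← hright.derivWithin u1, (hd.hasDerivWithinAt.derivWithin u1), hd.deriv]
  have e2 : -φ₂ 0 = deriv g 0 := by
    rw [← hleft.derivWithin u2, (hd.hasDerivWithinAt.derivWithin u2), hd.deriv]
  linarith
end

section
/- Let g ∈ L¹([0,1]^d) and f = g ∘ φ, where φ = (φ₁,...,φ_d) : ℝ^d → (0,1)^d is given by the strictly increasing C¹ marginal distribution functions φ_j(t) = ∫_{−∞}^t ρ_j(s)ds of positive continuous densities ρ_j. Then for every u ⊆ D, the ANOVA terms correspond under the transformation: f_u(ξ^u) = g_u(φ_u(ξ^u)), and the variances agree: σ_u²(f) (with respect to the product density ρ) equals σ_u²(g) (with respect to Lebesgue measure on [0,1]^d). In particular all effective dimensions of f and g coincide. -/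
open MeasureTheory

/-- The uniform (Lebesgue) probability measure on `[0,1]`. -/
noncomputable def unifMeas : Measure ℝ := MeasureTheory.volume.restrict (Set.Icc (0:ℝ) 1)

/-- Lebesgue measure on the unit cube `[0,1]^d`. -/
noncomputable def piUnif (d : ℕ) : Measure (Fin d → ℝ) :=
  Measure.pi fun _ : Fin d => unifMeas

/-- `P⋆_{-u} g` for `g ∈ L¹([0,1]^d)`: integrate out all coordinates outside `u`
against Lebesgue measure on `[0,1]`. -/
noncomputable def projU {d : ℕ} (u : Finset (Fin d))
    (g : (Fin d → ℝ) → ℝ) : (Fin d → ℝ) → ℝ :=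
  fun υ => ∫ η, g (fun i => if i ∈ u then υ i else η i) ∂(piUnif d)

/-- The ANOVA term `g_u` of `g ∈ L¹([0,1]^d)`. -/
noncomputable def anovaU {d : ℕ} (u : Finset (Fin d))
    (g : (Fin d → ℝ) → ℝ) : (Fin d → ℝ) → ℝ :=
  fun υ => ∑ v ∈ u.powerset, (-1 : ℝ) ^ (u.card - v.card) * projU v g υ


open Set Filter Topology in
lemma cdf_facts (ρ0 : ℝ → ℝ) (hc : Continuous ρ0) (h0 : ∀ s, 0 < ρ0 s)
    (h1 : ∫ s, ρ0 s = 1) (φ0 : ℝ → ℝ) (hφ0 : ∀ t, φ0 t = ∫ s in Set.Iic t, ρ0 s) :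
    StrictMono φ0 ∧
      IsProbabilityMeasure (MeasureTheory.volume.withDensity fun s => ENNReal.ofReal (ρ0 s)) ∧
      Measure.map φ0 (MeasureTheory.volume.withDensity fun s => ENNReal.ofReal (ρ0 s)) = unifMeas := by
  have hint : Integrable ρ0 := by
    by_contra h
    rw [integral_undef h] at h1; norm_num at h1
  set μ : Measure ℝ := MeasureTheory.volume.withDensity fun s => ENNReal.ofReal (ρ0 s) with hμ
  have hμIic : ∀ t, μ (Iic t) = ENNReal.ofReal (φ0 t) := by
    intro t
    rw [hμ, withDensity_apply _ measurableSet_Iic,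
      ← ofReal_integral_eq_lintegral_ofReal hint.integrableOn
        (Eventually.of_forall fun s => (h0 s).le), hφ0]
  have hμuniv : μ univ = 1 := by
    rw [hμ, withDensity_apply _ MeasurableSet.univ, Measure.restrict_univ,
      ← ofReal_integral_eq_lintegral_ofReal hint (Eventually.of_forall fun s => (h0 s).le),
      h1, ENNReal.ofReal_one]
  haveI hprob : IsProbabilityMeasure μ := ⟨hμuniv⟩
  have hsm : StrictMono φ0 := by
    intro a b hab
    have : φ0 b - φ0 a = ∫ x in a..b, ρ0 x := by
      rw [hφ0, hφ0]; exact intervalIntegral.integral_Iic_sub_Iic hint.integrableOn hint.integrableOn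
    have hpos : 0 < ∫ x in a..b, ρ0 x :=
      intervalIntegral.intervalIntegral_pos_of_pos hint.intervalIntegrable h0 hab
    linarith
  have hφnn : ∀ t, 0 ≤ φ0 t := by
    intro t
    rw [hφ0]
    exact setIntegral_nonneg measurableSet_Iic fun s _ => (h0 s).le
  have hφpos : ∀ t, 0 < φ0 t := by
    intro t
    have := hsm (show t - 1 < t by linarith)
    have := hφnn (t - 1)
    -- need strict positivity: φ0 (t-1) ≥ 0 and φ0 t > φ0 (t-1)
    linarith
  have hφle1 : ∀ t, φ0 t ≤ 1 := by
    intro t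
    have h : μ (Iic t) ≤ μ univ := measure_mono (subset_univ (Iic t))
    rw [hμIic, hμuniv] at h
    exact (ENNReal.ofReal_le_one).mp h
  have hφlt1 : ∀ t, φ0 t < 1 := fun t => lt_of_lt_of_le (hsm (lt_add_one t)) (hφle1 (t + 1))
  have hφeq : φ0 = fun t => (μ (Iic t)).toReal := by
    funext t; rw [hμIic, ENNReal.toReal_ofReal (hφnn t)]
  have htop : Tendsto φ0 atTop (𝓝 1) := by
    rw [hφeq]
    have : Tendsto (fun t => μ (Iic t)) atTop (𝓝 (μ univ)) := tendsto_measure_Iic_atTop μ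
    rw [hμuniv] at this
    exact (ENNReal.tendsto_toReal ENNReal.one_ne_top).comp this |>.congr (fun _ => rfl) |>.mono_left le_rfl |>.congr (fun _ => rfl) |>.trans_eq (by norm_num)
  have hbot : Tendsto φ0 atBot (𝓝 0) := by
    rw [hφeq]
    have h2 : Tendsto (fun t : ℝ => μ (Iic t)) atBot (𝓝 (μ (⋂ t : ℝ, Iic t))) :=
      tendsto_measure_iInter_atBot (fun t => measurableSet_Iic.nullMeasurableSet)
        (fun a b hab => Iic_subset_Iic.mpr hab) ⟨0, measure_ne_top μ _⟩
    have hempty : (⋂ t : ℝ, Iic t) = ∅ := by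
      ext x
      simp only [mem_iInter, mem_Iic, mem_empty_iff_false, iff_false, not_forall, not_le]
      exact ⟨x - 1, by linarith⟩
    rw [hempty, measure_empty] at h2
    exact (ENNReal.tendsto_toReal (by norm_num)).comp h2 |>.trans_eq (by norm_num)
  have hφcont : Continuous φ0 := by
    have : φ0 = fun t => (∫ x in (0:ℝ)..t, ρ0 x) + φ0 0 := by
      funext t
      have := intervalIntegral.integral_Iic_sub_Iic (a := (0:ℝ)) (b := t)
        hint.integrableOn hint.integrableOn
      rw [hφ0, hφ0] at *
      linarith [intervalIntegral.integral_Iic_sub_Iic (a := (0:ℝ)) (b := t)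
        (hint.integrableOn (s := Iic 0)) (hint.integrableOn (s := Iic t))]
    rw [this]
    exact (hint.continuous_primitive 0).add continuous_const
  refine ⟨hsm, hprob, ?_⟩
  have hφm : Measurable φ0 := hφcont.measurable
  haveI : IsProbabilityMeasure (Measure.map φ0 μ) := Measure.isProbabilityMeasure_map hφm.aemeasurable
  refine Measure.ext_of_Iic _ _ fun a => ?_
  rw [Measure.map_apply hφm measurableSet_Iic]
  rw [unifMeas, Measure.restrict_apply measurableSet_Iic]
  rcases le_or_gt a 0 with ha0 | ha0
  · have h1' : φ0 ⁻¹' Iic a = ∅ := by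
      ext t; simp only [mem_preimage, mem_Iic, mem_empty_iff_false, iff_false, not_le]
      exact lt_of_le_of_lt ha0 (hφpos t)
    have h2' : Iic a ∩ Icc (0:ℝ) 1 ⊆ Icc 0 a := fun x hx => ⟨hx.2.1, hx.1⟩
    rw [h1', measure_empty]
    refine (measure_mono_null h2' ?_).symm
    rw [Real.volume_Icc]
    simp [ENNReal.ofReal_eq_zero.mpr (by linarith)]
  rcases le_or_gt 1 a with ha1 | ha1
  · have h1' : φ0 ⁻¹' Iic a = univ := by
      ext t; simp only [mem_preimage, mem_Iic, mem_univ, iff_true]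
      exact le_trans (hφle1 t) ha1
    have h2' : Iic a ∩ Icc (0:ℝ) 1 = Icc 0 1 := by
      rw [inter_eq_right]
      exact fun x hx => le_trans hx.2 ha1
    rw [h1', h2', hμuniv, Real.volume_Icc]
    norm_num
  · -- 0 < a < 1
    obtain ⟨t₁, ht₁⟩ : ∃ t, φ0 t < a := (hbot.eventually_lt_const ha0).exists
    obtain ⟨t₂, ht₂⟩ : ∃ t, a < φ0 t := (htop.eventually_const_lt ha1).exists
    have ht12 : t₁ ≤ t₂ := by
      by_contra h
      push_neg at h
      exact absurd (hsm h) (by linarith)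
    obtain ⟨t₀, _, ht₀⟩ := intermediate_value_Icc ht12 hφcont.continuousOn
      (show a ∈ Icc (φ0 t₁) (φ0 t₂) from ⟨ht₁.le, ht₂.le⟩)
    have h1' : φ0 ⁻¹' Iic a = Iic t₀ := by
      ext t
      simp only [mem_preimage, mem_Iic, ← ht₀]
      exact ⟨fun h => (hsm.le_iff_le).mp h, fun h => hsm.monotone h⟩
    have h2' : Iic a ∩ Icc (0:ℝ) 1 = Icc 0 a := by
      ext x
      simp only [mem_inter_iff, mem_Iic, mem_Icc]
      constructor
      · rintro ⟨h1, h2, _⟩; exact ⟨h2, h1⟩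
      · rintro ⟨h1, h2⟩; exact ⟨h2, h1, le_trans h2 ha1.le⟩
    rw [h1', h2', hμIic, ht₀, Real.volume_Icc]
    norm_num

/-- Under the transformation `f = g ∘ φ` given by the marginal distribution functions
`φ_j` of positive continuous densities `ρ_j`, the ANOVA terms correspond:
`f_u(ξ) = g_u(φ(ξ))`, and the ANOVA variances (hence all effective dimensions)
coincide. -/

theorem anova_transformation_invariance {d : ℕ} (ρ : Fin d → ℝ → ℝ)
    (hρc : ∀ j, Continuous (ρ j)) (hρ0 : ∀ j s, 0 < ρ j s)
    (hρ1 : ∀ j, ∫ s, ρ j s = 1)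
    (φ : Fin d → ℝ → ℝ) (hφ : ∀ j t, φ j t = ∫ s in Set.Iic t, ρ j s)
    (g : (Fin d → ℝ) → ℝ) (hg1 : Integrable g (piUnif d))
    (hg2 : MemLp g 2 (piUnif d))
    (f : (Fin d → ℝ) → ℝ) (hfdef : f = fun ξ => g (fun i => φ i (ξ i))) :
    (∀ (u : Finset (Fin d)) (ξ : Fin d → ℝ),
      anova ρ u f ξ = anovaU u g (fun i => φ i (ξ i))) ∧
    (∀ u : Finset (Fin d),
      ∫ ξ, (anova ρ u f ξ) ^ 2 ∂(piMeas ρ) = ∫ υ, (anovaU u g υ) ^ 2 ∂(piUnif d)) := by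
  have hfacts := fun j => cdf_facts (ρ j) (hρc j) (hρ0 j) (hρ1 j) (φ j) (hφ j)
  have hsm : ∀ j, StrictMono (φ j) := fun j => (hfacts j).1
  haveI : ∀ i, IsProbabilityMeasure (margMeas ρ i) := fun i => (hfacts i).2.1
  have hmap : ∀ j, Measure.map (φ j) (margMeas ρ j) = unifMeas := fun j => (hfacts j).2.2
  haveI : IsProbabilityMeasure unifMeas := by
    constructor
    rw [unifMeas, Measure.restrict_apply MeasurableSet.univ, Set.univ_inter, Real.volume_Icc]
    norm_num
  set h : (Fin d → ℝ) → (Fin d → ℝ) := fun ξ i => φ i (ξ i) with hdef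
  have hφm : ∀ j, Measurable (φ j) := fun j => (hsm j).monotone.measurable
  have hmeas : Measurable h :=
    measurable_pi_iff.2 fun i => (hφm i).comp (measurable_pi_apply i)
  have hinj : Function.Injective h := fun x y hxy =>
    funext fun i => (hsm i).injective (congrFun hxy i)
  have hemb : MeasurableEmbedding h := hmeas.measurableEmbedding hinj
  have hmp : MeasurePreserving h (piMeas ρ) (piUnif d) :=
    measurePreserving_pi (fun i => margMeas ρ i) (fun _ => unifMeas)
      (fun i => ⟨hφm i, hmap i⟩)
  have hmapμ : Measure.map h (piMeas ρ) = piUnif d := hmp.map_eq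
  have hproj : ∀ (v : Finset (Fin d)) ξ, proj ρ v f ξ = projU v g (h ξ) := by
    intro v ξ
    unfold proj projU
    rw [← hmapμ, hemb.integral_map]
    congr 1
    funext η
    rw [hfdef]
    simp only []
    congr 1
    funext i
    by_cases hi : i ∈ v <;> simp [h, hi]
  have hanova : ∀ (u : Finset (Fin d)) ξ, anova ρ u f ξ = anovaU u g (h ξ) := by
    intro u ξ
    unfold anova anovaU
    exact Finset.sum_congr rfl fun v _ => by rw [hproj]
  refine ⟨hanova, fun u => ?_⟩
  calc ∫ ξ, (anova ρ u f ξ) ^ 2 ∂(piMeas ρ)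
      = ∫ ξ, (anovaU u g (h ξ)) ^ 2 ∂(piMeas ρ) := by simp_rw [hanova]
    _ = ∫ υ, (anovaU u g υ) ^ 2 ∂(piUnif d) := by rw [← hmapμ, hemb.integral_map]
end
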